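/- For every positive integer a, the polynomial x^4 + (4a + 2)x^2 + 1 is irreducible in ℤ[x]. -/
import Mathlib

open Polynomial

private lemma no_linear_factor (a : ℤ) (ha : 0 < a) (p : ℤ[X]) (hp : p.Monic)
    (hd : p.natDegree = 1)
    (hdvd : p ∣ (X ^ 4 + C (4 * a + 2) * X ^ 2 + 1 : ℤ[X])) : False := by
  have hform := hp.eq_X_add_C hd
  obtain ⟨q, hq⟩ := hdvd
  set r := p.coeff 0 with hr
  have heval : (X ^ 4 + C (4 * a + 2) * X ^ 2 + 1 : ℤ[X]).eval (-r) = 0 := by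
    rw [hq, eval_mul, hform]
    simp
  simp only [eval_add, eval_pow, eval_mul, eval_X, eval_C, eval_one] at heval
  nlinarith [sq_nonneg (r ^ 2), sq_nonneg r, ha]

private lemma no_monic_split (a : ℤ) (ha : 0 < a) (g h : ℤ[X])
    (hg : g.Monic) (hh : h.Monic)
    (hfe : (X ^ 4 + C (4 * a + 2) * X ^ 2 + 1 : ℤ[X]) = g * h)
    (hgu : ¬ IsUnit g) (hhu : ¬ IsUnit h) : False := by
  set f : ℤ[X] := X ^ 4 + C (4 * a + 2) * X ^ 2 + 1 with hf
  have hfd : f.natDegree = 4 := by unfold f; compute_degree!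
  have hdeg : g.natDegree + h.natDegree = 4 := by
    rw [← natDegree_mul hg.ne_zero hh.ne_zero, ← hfe, hfd]
  have hg1 : 1 ≤ g.natDegree := hg.natDegree_pos.mpr (fun h1 => hgu (h1 ▸ isUnit_one))
  have hh1 : 1 ≤ h.natDegree := hh.natDegree_pos.mpr (fun h1 => hhu (h1 ▸ isUnit_one))
  have hgub : g.natDegree ≤ 3 := by omega
  interval_cases hgd : g.natDegree
  · exact no_linear_factor a ha g hg hgd ⟨h, hfe⟩
  · -- degree 2 + 2 case
    have hhd : h.natDegree = 2 := by omega
    have hg2 : g.coeff 2 = 1 := by have := hg.coeff_natDegree; rwa [hgd] at this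
    have hh2 : h.coeff 2 = 1 := by have := hh.coeff_natDegree; rwa [hhd] at this
    have hg3 : g.coeff 3 = 0 := coeff_eq_zero_of_natDegree_lt (by omega)
    have hh3 : h.coeff 3 = 0 := coeff_eq_zero_of_natDegree_lt (by omega)
    have f0 : f.coeff 0 = 1 := by
      rw [hf]; simp only [coeff_add, coeff_C_mul, coeff_X_pow, coeff_one]; norm_num
    have f1 : f.coeff 1 = 0 := by
      rw [hf]; simp only [coeff_add, coeff_C_mul, coeff_X_pow, coeff_one]; norm_num
    have f2 : f.coeff 2 = 4 * a + 2 := by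
      rw [hf]; simp only [coeff_add, coeff_C_mul, coeff_X_pow, coeff_one]; norm_num
    have f3 : f.coeff 3 = 0 := by
      rw [hf]; simp only [coeff_add, coeff_C_mul, coeff_X_pow, coeff_one]; norm_num
    have e0 := congrArg (fun p : ℤ[X] => p.coeff 0) hfe
    have e1 := congrArg (fun p : ℤ[X] => p.coeff 1) hfe
    have e2 := congrArg (fun p : ℤ[X] => p.coeff 2) hfe
    have e3 := congrArg (fun p : ℤ[X] => p.coeff 3) hfe
    simp only [f0, f1, f2, f3, coeff_mul,
      Finset.Nat.sum_antidiagonal_eq_sum_range_succ_mk, Finset.sum_range_succ,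
      Finset.sum_range_zero, hg2, hh2, hg3, hh3, zero_add, zero_mul, mul_zero,
      mul_one, one_mul, add_zero] at e0 e1 e2 e3
    set b0 := g.coeff 0
    set b1 := g.coeff 1
    set c0 := h.coeff 0
    set c1 := h.coeff 1
    rcases Int.mul_eq_one_iff_eq_one_or_neg_one.mp e0.symm with ⟨h1, h2⟩ | ⟨h1, h2⟩ <;>
      rw [h1, h2] at e1 e2 <;> nlinarith [sq_nonneg b1, sq_nonneg c1]
  · have hhd : h.natDegree = 1 := by omega
    exact no_linear_factor a ha h hh hhd ⟨g, by rw [← hf, hfe, mul_comm]⟩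

theorem stmt_14 (a : ℤ) (ha : 0 < a) :
    Irreducible (X ^ 4 + C (4 * a + 2) * X ^ 2 + 1 : Polynomial ℤ) := by
  set f : ℤ[X] := X ^ 4 + C (4 * a + 2) * X ^ 2 + 1 with hf
  have hfd : f.natDegree = 4 := by unfold f; compute_degree!
  have hmonic : f.Monic := by unfold f; monicity!
  constructor
  · intro hu
    have := natDegree_eq_zero_of_isUnit hu
    omega
  · intro g h hfe
    by_contra hcon
    push_neg at hcon
    obtain ⟨hgu, hhu⟩ := hcon
    have hlc : g.leadingCoeff * h.leadingCoeff = 1 := by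
      rw [← leadingCoeff_mul, ← hfe]; exact hmonic
    rcases Int.mul_eq_one_iff_eq_one_or_neg_one.mp hlc with ⟨h1, h2⟩ | ⟨h1, h2⟩
    · exact no_monic_split a ha g h h1 h2 hfe hgu hhu
    · refine no_monic_split a ha (-g) (-h) ?_ ?_ (by rw [← hf, hfe]; ring)
        (by simpa using hgu) (by simpa using hhu) <;>
        simp [Polynomial.Monic, h1, h2]
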